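/- Let M be a symmetric n×n integer matrix and let M̄ be its reduction mod 2. Then the Monsky sum λ(M) is nonzero if and only if the quadratic enhancement φ_M is proper, i.e., if and only if q_M(v) ≡ 0 (mod 4) for every v ∈ (ℤ/2)ⁿ lying in the kernel of M̄ (the radical of the mod-2 bilinear form). -/

import Mathlib

open Matrix

/-- The `{0,1}`-valued integer lift of a mod-2 vector. -/
def zlift {ι : Type*} (v : ι → ZMod 2) : ι → ℤ := fun i => ((v i).val : ℤ)

/-- The integral quadratic form `q_M(v) = ṽᵀ M ṽ` evaluated on the `{0,1}` lift of `v`. -/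
def qForm {ι : Type*} [Fintype ι] (M : Matrix ι ι ℤ) (v : ι → ZMod 2) : ℤ :=
  ∑ i, ∑ j, zlift v i * M i j * zlift v j

/-- The Monsky sum `λ(M) = Σ_{v ∈ (ℤ/2)ⁿ} i^{q_M(v)}`. -/
noncomputable def monsky {ι : Type*} [Fintype ι] [DecidableEq ι] (M : Matrix ι ι ℤ) : ℂ :=
  ∑ v : ι → ZMod 2, Complex.I ^ qForm M v

namespace MonskyAux

lemma I_zpow_four : Complex.I ^ (4:ℤ) = 1 := by
  rw [show (4:ℤ) = ((4:ℕ):ℤ) from rfl, zpow_natCast, Complex.I_pow_four]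

lemma I_zpow_two : Complex.I ^ (2:ℤ) = -1 := by
  rw [show (2:ℤ) = ((2:ℕ):ℤ) from rfl, zpow_natCast, Complex.I_sq]

lemma I_zpow_congr {a b : ℤ} (h : (a : ZMod 4) = (b : ZMod 4)) :
    Complex.I ^ a = Complex.I ^ b := by
  have h4 : ((4:ℕ):ℤ) ∣ b - a := ((ZMod.intCast_eq_intCast_iff a b 4).mp h).dvd
  obtain ⟨k, hk⟩ := h4
  have hb : b = a + 4 * k := by push_cast at hk; linarith
  rw [hb, zpow_add₀ Complex.I_ne_zero, _root_.zpow_mul, I_zpow_four, _root_.one_zpow, mul_one]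

noncomputable def sgn (x : ZMod 2) : ℂ := if x = 0 then 1 else -1

lemma zmod2_ne_zero {a : ZMod 2} (h : a ≠ 0) : a = 1 := by revert h; revert a; decide

lemma sgn_add (x y : ZMod 2) : sgn (x + y) = sgn x * sgn y := by
  fin_cases x <;> fin_cases y <;>
    simp [sgn, show (1+1 : ZMod 2) = 0 from rfl, show (1:ZMod 2) ≠ 0 from by decide] <;> split_ifs <;> simp_all <;> contradiction

lemma neg_one_zpow_eq_sgn (m : ℤ) : (-1:ℂ) ^ m = sgn ((m:ℤ) : ZMod 2) := by
  rcases Int.even_or_odd m with ⟨k, hk⟩ | ⟨k, hk⟩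
  · subst hk
    rw [Even.neg_one_zpow ⟨k, rfl⟩]
    have : ((k+k : ℤ) : ZMod 2) = 0 := by
      push_cast; rw [← two_mul, show (2:ZMod 2) = 0 from rfl, zero_mul]
    simp [sgn, this]
  · subst hk
    rw [Odd.neg_one_zpow ⟨k, rfl⟩]
    have : ((2*k+1 : ℤ) : ZMod 2) = 1 := by
      push_cast; rw [show (2:ZMod 2) = 0 from rfl, zero_mul, zero_add]
    simp [sgn, this, show (1:ZMod 2) ≠ 0 from by decide]

lemma sgn_sum {ι : Type*} (s : Finset ι) (f : ι → ZMod 2) :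
    sgn (∑ i ∈ s, f i) = ∏ i ∈ s, sgn (f i) := by
  induction s using Finset.cons_induction with
  | empty => simp [sgn]
  | cons a s ha ih => rw [Finset.sum_cons, Finset.prod_cons, sgn_add, ih]

lemma sum_sgn_dot {n : ℕ} (c : Fin n → ZMod 2) :
    ∑ v : Fin n → ZMod 2, sgn (c ⬝ᵥ v) = if c = 0 then (2:ℂ)^n else 0 := by
  have sum2 : ∀ f : ZMod 2 → ℂ, ∑ t : ZMod 2, f t = f 0 + f 1 := by
    intro f
    rw [show (Finset.univ : Finset (ZMod 2)) = {0, 1} by decide,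
      Finset.sum_insert (by decide), Finset.sum_singleton]
  have key : ∑ v : Fin n → ZMod 2, sgn (c ⬝ᵥ v) = ∏ j, (1 + sgn (c j)) := by
    have h1 : ∀ j : Fin n, (1 : ℂ) + sgn (c j) = ∑ t : ZMod 2, sgn (c j * t) := by
      intro j; rw [sum2 (fun t => sgn (c j * t))]; simp [sgn]
    rw [Finset.prod_congr rfl (fun j _ => h1 j), Finset.prod_univ_sum,
      Fintype.piFinset_univ]
    refine Finset.sum_congr rfl fun v _ => ?_
    rw [dotProduct, sgn_sum]
  rw [key]
  by_cases hc : c = 0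
  · subst hc; simp [sgn]; norm_num
  · rw [if_neg hc]
    obtain ⟨j, hj⟩ := Function.ne_iff.mp hc
    refine Finset.prod_eq_zero (Finset.mem_univ j) ?_
    have h1 : c j = 1 := zmod2_ne_zero (by simpa using hj)
    rw [h1]; simp [sgn, show (1:ZMod 2) ≠ 0 from by decide]

variable {n : ℕ}

lemma dot_symm (M : Matrix (Fin n) (Fin n) ℤ) (h : M.IsSymm) (x y : Fin n → ℤ) :
    x ⬝ᵥ M *ᵥ y = y ⬝ᵥ M *ᵥ x := by
  rw [dotProduct_mulVec]
  nth_rewrite 1 [← h]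
  rw [vecMul_transpose, dotProduct_comm]

lemma qForm_eq (M : Matrix (Fin n) (Fin n) ℤ) (v : Fin n → ZMod 2) :
    qForm M v = zlift v ⬝ᵥ M *ᵥ zlift v := by
  simp only [qForm, dotProduct, mulVec, Finset.mul_sum, mul_assoc]

lemma zlift_add (u v : Fin n → ZMod 2) :
    zlift (u + v) = zlift u + zlift v - (2:ℤ) • (zlift u * zlift v) := by
  funext i
  have h : ∀ a b : ZMod 2, (((a+b).val : ℤ)) = (a.val : ℤ) + b.val - 2 * ((a.val : ℤ) * b.val) := by
    decide
  simp only [zlift, Pi.add_apply, Pi.sub_apply, Pi.smul_apply, Pi.mul_apply, smul_eq_mul]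
  exact h (u i) (v i)

lemma expand (M : Matrix (Fin n) (Fin n) ℤ) (h : M.IsSymm) (A B C : Fin n → ℤ) :
    (A + B - (2:ℤ) • C) ⬝ᵥ M *ᵥ (A + B - (2:ℤ) • C)
      = A ⬝ᵥ M *ᵥ A + B ⬝ᵥ M *ᵥ B + 2 * (A ⬝ᵥ M *ᵥ B)
        + 4 * (C ⬝ᵥ M *ᵥ C - A ⬝ᵥ M *ᵥ C - B ⬝ᵥ M *ᵥ C) := by
  have hBA := dot_symm M h B A
  have hCA := dot_symm M h C A
  have hCB := dot_symm M h C B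
  simp only [mulVec_add, mulVec_sub, mulVec_smul, add_dotProduct, sub_dotProduct,
    smul_dotProduct, dotProduct_add, dotProduct_sub, dotProduct_smul, smul_eq_mul]
  linear_combination hBA - 2 * hCA - 2 * hCB

lemma qForm_add (M : Matrix (Fin n) (Fin n) ℤ) (hM : M.IsSymm) (u v : Fin n → ZMod 2) :
    qForm M (u + v) = qForm M u + qForm M v + 2 * (zlift u ⬝ᵥ M *ᵥ zlift v)
      + 4 * ((zlift u * zlift v) ⬝ᵥ M *ᵥ (zlift u * zlift v)
          - zlift u ⬝ᵥ M *ᵥ (zlift u * zlift v)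
          - zlift v ⬝ᵥ M *ᵥ (zlift u * zlift v)) := by
  rw [qForm_eq, qForm_eq, qForm_eq, zlift_add, expand M hM]

lemma cast_dot (M : Matrix (Fin n) (Fin n) ℤ) (u w : Fin n → ZMod 2) :
    ((zlift u ⬝ᵥ M *ᵥ zlift w : ℤ) : ZMod 2)
      = u ⬝ᵥ (M.map (Int.cast : ℤ → ZMod 2)) *ᵥ w := by
  have hzc : ∀ a : ZMod 2, ((a.val : ZMod 2)) = a := by decide
  simp only [dotProduct, mulVec, zlift, Matrix.map_apply]
  push_cast
  simp only [hzc]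

end MonskyAux

open MonskyAux in
/-- The Monsky sum `λ(M)` of a symmetric integer matrix `M` is nonzero iff the
quadratic enhancement `φ_M` is proper, i.e. iff `q_M(v) ≡ 0 (mod 4)` for every `v ∈ (ℤ/2)ⁿ` in
the kernel of `M` mod 2 (the radical of the mod-2 bilinear form). -/
theorem monsky_ne_zero_iff_proper {n : ℕ} (M : Matrix (Fin n) (Fin n) ℤ) (hM : M.IsSymm) :
    monsky M ≠ 0 ↔
      ∀ v : Fin n → ZMod 2,
        (M.map (Int.cast : ℤ → ZMod 2)).mulVec v = 0 → ((qForm M v : ℤ) : ZMod 4) = 0 := by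
  classical
  set N : Matrix (Fin n) (Fin n) (ZMod 2) := M.map (Int.cast : ℤ → ZMod 2) with hNdef
  set R : Finset (Fin n → ZMod 2) := Finset.univ.filter (fun w => N *ᵥ w = 0) with hRdef
  -- pointwise identity
  have hpt : ∀ v w : Fin n → ZMod 2,
      Complex.I ^ (qForm M (v + w) - qForm M v)
        = Complex.I ^ qForm M w * sgn ((N *ᵥ w) ⬝ᵥ v) := by
    intro v w
    have hq := qForm_add M hM v w
    set b : ℤ := zlift v ⬝ᵥ M *ᵥ zlift w with hb
    set K : ℤ := (zlift v * zlift w) ⬝ᵥ M *ᵥ (zlift v * zlift w)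
        - zlift v ⬝ᵥ M *ᵥ (zlift v * zlift w) - zlift w ⬝ᵥ M *ᵥ (zlift v * zlift w) with hK
    have he : qForm M (v + w) - qForm M v = qForm M w + 2 * b + 4 * K := by rw [hq]; ring
    rw [he, zpow_add₀ Complex.I_ne_zero, zpow_add₀ Complex.I_ne_zero,
      _root_.zpow_mul, _root_.zpow_mul, I_zpow_two, I_zpow_four,
      _root_.one_zpow, mul_one, neg_one_zpow_eq_sgn]
    congr 2
    rw [hb, cast_dot M v w, dotProduct_comm]
  -- conjugate
  have hconj : (starRingEnd ℂ) (monsky M) = ∑ v : Fin n → ZMod 2, Complex.I ^ (-qForm M v) := by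
    rw [monsky, map_sum]
    refine Finset.sum_congr rfl fun v _ => ?_
    rw [map_zpow₀, Complex.conj_I, ← Complex.inv_I, _root_.inv_zpow, ← _root_.zpow_neg]
  -- key computation
  have key : monsky M * (starRingEnd ℂ) (monsky M)
      = (2:ℂ)^n * ∑ w ∈ R, Complex.I ^ qForm M w := by
    rw [hconj, monsky]
    calc (∑ u : Fin n → ZMod 2, Complex.I ^ qForm M u)
          * ∑ v : Fin n → ZMod 2, Complex.I ^ (-qForm M v)
        = ∑ v : Fin n → ZMod 2, ∑ u : Fin n → ZMod 2,
            Complex.I ^ (qForm M u - qForm M v) := by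
          rw [Finset.sum_mul_sum, Finset.sum_comm]
          exact Finset.sum_congr rfl fun v _ => Finset.sum_congr rfl fun u _ => by
            rw [← zpow_add₀ Complex.I_ne_zero, sub_eq_add_neg]
      _ = ∑ v : Fin n → ZMod 2, ∑ w : Fin n → ZMod 2,
            Complex.I ^ (qForm M (v + w) - qForm M v) := by
          refine Finset.sum_congr rfl fun v _ => ?_
          exact (Equiv.sum_comp (Equiv.addLeft v)
            (fun u => Complex.I ^ (qForm M u - qForm M v))).symm
      _ = ∑ w : Fin n → ZMod 2, Complex.I ^ qForm M w * ∑ v : Fin n → ZMod 2,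
            sgn ((N *ᵥ w) ⬝ᵥ v) := by
          rw [Finset.sum_comm]
          exact Finset.sum_congr rfl fun w _ => by
            rw [Finset.mul_sum]
            exact Finset.sum_congr rfl fun v _ => hpt v w
      _ = ∑ w : Fin n → ZMod 2, Complex.I ^ qForm M w
            * (if N *ᵥ w = 0 then (2:ℂ)^n else 0) := by
          exact Finset.sum_congr rfl fun w _ => by rw [sum_sgn_dot]
      _ = ∑ w ∈ R, Complex.I ^ qForm M w * (2:ℂ)^n := by
          simp only [mul_ite, mul_zero]
          exact (Finset.sum_filter _ _).symm
      _ = (2:ℂ)^n * ∑ w ∈ R, Complex.I ^ qForm M w := by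
          rw [← Finset.sum_mul, mul_comm]
  have h0R : (0 : Fin n → ZMod 2) ∈ R := by
    simp [hRdef, Matrix.mulVec_zero]
  constructor
  · -- λ ≠ 0 → proper
    intro hne v hv
    by_contra hv4
    have hvR : v ∈ R := Finset.mem_filter.mpr ⟨Finset.mem_univ _, hv⟩
    -- q v ≡ 2 mod 4
    have h2 : ((qForm M v : ℤ) : ZMod 2) = 0 := by
      rw [qForm_eq, cast_dot, hv, dotProduct_zero]
    obtain ⟨m, hm⟩ := (ZMod.intCast_zmod_eq_zero_iff_dvd _ 2).mp h2
    have h4 : ((qForm M v : ℤ) : ZMod 4) = 2 := by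
      have hd : ∀ a : ZMod 4, 2 * a = 0 ∨ 2 * a = 2 := by decide
      rw [hm]; push_cast
      rcases hd (m : ZMod 4) with h | h
      · exact absurd (by rw [hm]; push_cast; exact h) hv4
      · exact h
    have hIv : Complex.I ^ qForm M v = -1 := by
      rw [I_zpow_congr (b := 2) (by rw [h4]; norm_num), I_zpow_two]
    -- shift
    have hvv : v + v = 0 := by
      funext i; exact CharTwo.add_self_eq_zero (v i)
    have hshift : ∀ w ∈ R, Complex.I ^ qForm M w = - Complex.I ^ qForm M (w + v) := by
      intro w hw
      have hq := qForm_add M hM w v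
      have hbev : ((zlift w ⬝ᵥ M *ᵥ zlift v : ℤ) : ZMod 2) = 0 := by
        rw [cast_dot, hv, dotProduct_zero]
      obtain ⟨c, hc⟩ := (ZMod.intCast_zmod_eq_zero_iff_dvd _ 2).mp hbev
      have he : qForm M (w + v) = qForm M w + qForm M v
          + 4 * (c + ((zlift w * zlift v) ⬝ᵥ M *ᵥ (zlift w * zlift v)
          - zlift w ⬝ᵥ M *ᵥ (zlift w * zlift v)
          - zlift v ⬝ᵥ M *ᵥ (zlift w * zlift v))) := by
        rw [hq, hc]; push_cast; ring
      rw [he, zpow_add₀ Complex.I_ne_zero, zpow_add₀ Complex.I_ne_zero,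
        _root_.zpow_mul, I_zpow_four, _root_.one_zpow, mul_one, hIv]
      ring
    have hSS : ∑ w ∈ R, Complex.I ^ qForm M w
        = - ∑ w ∈ R, Complex.I ^ qForm M w := by
      nth_rewrite 1 [Finset.sum_congr rfl hshift]
      rw [Finset.sum_neg_distrib]
      congr 1
      refine Finset.sum_nbij' (fun w => w + v) (fun w => w + v) ?_ ?_ ?_ ?_ ?_
      · intro a ha
        refine Finset.mem_filter.mpr ⟨Finset.mem_univ _, ?_⟩
        rw [Matrix.mulVec_add, (Finset.mem_filter.mp ha).2, hv, add_zero]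
      · intro a ha
        refine Finset.mem_filter.mpr ⟨Finset.mem_univ _, ?_⟩
        rw [Matrix.mulVec_add, (Finset.mem_filter.mp ha).2, hv, add_zero]
      · intro a _; show a + v + v = a; rw [add_assoc, hvv, add_zero]
      · intro a _; show a + v + v = a; rw [add_assoc, hvv, add_zero]
      · intro a _; rfl
    have hS0 : ∑ w ∈ R, Complex.I ^ qForm M w = 0 := by
      have h2S : (2:ℂ) * ∑ w ∈ R, Complex.I ^ qForm M w = 0 := by
        linear_combination hSS
      rcases mul_eq_zero.mp h2S with h | h
      · norm_num at h
      · exact h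
    rw [hS0, mul_zero] at key
    rcases mul_eq_zero.mp key with h | h
    · exact hne h
    · exact hne ((map_eq_zero_iff _ (RingHom.injective _)).mp h)
  · -- proper → λ ≠ 0
    intro hprop hne0
    have hterm : ∀ w ∈ R, Complex.I ^ qForm M w = 1 := by
      intro w hw
      have h0 := hprop w ((Finset.mem_filter.mp hw).2)
      rw [I_zpow_congr (b := 0) (by rw [h0]; norm_num), zpow_zero]
    rw [hne0, zero_mul] at key
    rw [Finset.sum_congr rfl hterm, Finset.sum_const, nsmul_eq_mul, mul_one] at key
    have hcard : 0 < R.card := Finset.card_pos.mpr ⟨0, h0R⟩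
    have hne' : ((2:ℂ)^n * R.card) ≠ 0 :=
      mul_ne_zero (pow_ne_zero _ two_ne_zero) (Nat.cast_ne_zero.mpr hcard.ne')
    exact hne' key.symm
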